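/- Let G have maximum degree Δ and let C be an ε-almost-clique (i.e., |C| ≤ (1+ε)Δ and every v ∈ C has at least (1−ε)Δ neighbors inside C), with ε < 1/3. Then for every v ∈ C, the anti-degree a_v = |C \ (N(v) ∪ {v})| satisfies a_v ≤ 2ζ_v/(1−3ε), where ζ_v is the local sparsity of v. -/

import Mathlib

open Finset

/-- Number of edges of `G` with both endpoints in `S` (as a rational, counted via
half the sum of internal degrees). -/
noncomputable def edgesIn {V : Type*} [Fintype V] [DecidableEq V] (G : SimpleGraph V)
    [DecidableRel G.Adj] (S : Finset V) : ℚ :=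
  (∑ u ∈ S, ((G.neighborFinset u ∩ S).card : ℚ)) / 2

/-- Local sparsity ζ_v = (1/Δ)·(Δ(Δ−1)/2 − m(N(v))). -/
noncomputable def sparsity {V : Type*} [Fintype V] [DecidableEq V] (G : SimpleGraph V)
    [DecidableRel G.Adj] (Δ : ℕ) (v : V) : ℚ :=
  ((Δ : ℚ) * ((Δ : ℚ) - 1) / 2 - edgesIn G (G.neighborFinset v)) / Δ


theorem stmt2 {V : Type*} [Fintype V] [DecidableEq V] (G : SimpleGraph V)
    [DecidableRel G.Adj] (Δ : ℕ) (hΔ : 1 ≤ Δ) (hdeg : ∀ w : V, G.degree w ≤ Δ)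
    (ε : ℚ) (hε0 : 0 < ε) (hε : ε < 1/3) (C : Finset V)
    (hCcard : (C.card : ℚ) ≤ (1 + ε) * Δ)
    (hCdeg : ∀ v ∈ C, (1 - ε) * Δ ≤ ((G.neighborFinset v ∩ C).card : ℚ))
    (v : V) (hv : v ∈ C) :
    ((C \ insert v (G.neighborFinset v)).card : ℚ)
      ≤ 2 * sparsity G Δ v / (1 - 3 * ε) := by
  classical
  set N := G.neighborFinset v with hN
  set A := C \ insert v N with hA
  have hε3 : (0:ℚ) < 1 - 3 * ε := by linarith
  have hΔQ : (0:ℚ) < (Δ:ℚ) := by exact_mod_cast hΔ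
  -- Step 1: each anti-neighbor has many common neighbors with v
  have step1 : ∀ w ∈ A, (1 - 3*ε) * Δ ≤ ((N ∩ G.neighborFinset w).card : ℚ) := by
    intro w hw
    have hwC : w ∈ C := (Finset.mem_sdiff.mp hw).1
    have h1 := hCdeg v hv
    have h2 := hCdeg w hwC
    have hunion : ((N ∩ C) ∪ (G.neighborFinset w ∩ C)).card ≤ C.card := by
      apply Finset.card_le_card
      intro x hx
      rcases Finset.mem_union.mp hx with h | h
      · exact (Finset.mem_inter.mp h).2
      · exact (Finset.mem_inter.mp h).2
    have hie := Finset.card_inter_add_card_union (N ∩ C) (G.neighborFinset w ∩ C)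
    have hsub : (N ∩ C) ∩ (G.neighborFinset w ∩ C) ⊆ N ∩ G.neighborFinset w := by
      intro x hx
      simp only [Finset.mem_inter] at hx ⊢
      exact ⟨hx.1.1, hx.2.1⟩
    have hc := Finset.card_le_card hsub
    have hieQ : (((N ∩ C) ∩ (G.neighborFinset w ∩ C)).card : ℚ)
        + (((N ∩ C) ∪ (G.neighborFinset w ∩ C)).card : ℚ)
        = ((N ∩ C).card : ℚ) + ((G.neighborFinset w ∩ C).card : ℚ) := by
      exact_mod_cast hie
    have hcQ : (((N ∩ C) ∩ (G.neighborFinset w ∩ C)).card : ℚ)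
        ≤ ((N ∩ G.neighborFinset w).card : ℚ) := by exact_mod_cast hc
    have hunionQ : (((N ∩ C) ∪ (G.neighborFinset w ∩ C)).card : ℚ) ≤ (C.card : ℚ) := by
      exact_mod_cast hunion
    linarith
  -- Step 2: double counting
  have step2 : ∑ w ∈ A, ((N ∩ G.neighborFinset w).card)
      = ∑ u ∈ N, ((A ∩ G.neighborFinset u).card) := by
    have key : ∀ (s t : Finset V), ∀ x, (s ∩ G.neighborFinset x).card
        = ∑ u ∈ s, if G.Adj x u then 1 else 0 := by
      intro s t x
      rw [← Finset.card_filter]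
      congr 1
      ext u
      simp [SimpleGraph.mem_neighborFinset, SimpleGraph.adj_comm]
    calc ∑ w ∈ A, (N ∩ G.neighborFinset w).card
        = ∑ w ∈ A, ∑ u ∈ N, (if G.Adj w u then 1 else 0) := by
          refine Finset.sum_congr rfl fun w _ => key N A w
      _ = ∑ u ∈ N, ∑ w ∈ A, (if G.Adj w u then 1 else 0) := Finset.sum_comm
      _ = ∑ u ∈ N, ∑ w ∈ A, (if G.Adj u w then 1 else 0) := by
          refine Finset.sum_congr rfl fun u _ => Finset.sum_congr rfl fun w _ => ?_
          simp [SimpleGraph.adj_comm]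
      _ = ∑ u ∈ N, (A ∩ G.neighborFinset u).card := by
          refine Finset.sum_congr rfl fun u _ => (key A N u).symm
  -- Step 3: per-vertex degree budget
  have step3 : ∀ u ∈ N, ((A ∩ G.neighborFinset u).card : ℚ)
      ≤ (Δ:ℚ) - 1 - ((G.neighborFinset u ∩ N).card : ℚ) := by
    intro u hu
    have hadj : G.Adj v u := (SimpleGraph.mem_neighborFinset G v u).mp hu
    have hvNu : v ∈ G.neighborFinset u := by
      rw [SimpleGraph.mem_neighborFinset]; exact hadj.symm
    have hdisj : Disjoint (A ∩ G.neighborFinset u) (G.neighborFinset u ∩ N) := by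
      rw [Finset.disjoint_left]
      intro x hx1 hx2
      have hxA : x ∈ A := (Finset.mem_inter.mp hx1).1
      have hxN : x ∈ N := (Finset.mem_inter.mp hx2).2
      have := (Finset.mem_sdiff.mp hxA).2
      exact this (Finset.mem_insert_of_mem hxN)
    have hvnot : v ∉ (A ∩ G.neighborFinset u) ∪ (G.neighborFinset u ∩ N) := by
      rw [Finset.mem_union]
      rintro (h | h)
      · have := (Finset.mem_sdiff.mp (Finset.mem_inter.mp h).1).2
        exact this (Finset.mem_insert_self v N)
      · have := (Finset.mem_inter.mp h).2
        exact G.notMem_neighborFinset_self v this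
    have hsub : insert v ((A ∩ G.neighborFinset u) ∪ (G.neighborFinset u ∩ N))
        ⊆ G.neighborFinset u := by
      intro x hx
      rcases Finset.mem_insert.mp hx with rfl | hx
      · exact hvNu
      · rcases Finset.mem_union.mp hx with h | h
        · exact (Finset.mem_inter.mp h).2
        · exact (Finset.mem_inter.mp h).1
    have hcard : (A ∩ G.neighborFinset u).card + (G.neighborFinset u ∩ N).card + 1 ≤ Δ := by
      have h1 : (insert v ((A ∩ G.neighborFinset u) ∪ (G.neighborFinset u ∩ N))).card
          ≤ G.degree u := by
        rw [← SimpleGraph.card_neighborFinset_eq_degree]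
        exact Finset.card_le_card hsub
      rw [Finset.card_insert_of_notMem hvnot, Finset.card_union_of_disjoint hdisj] at h1
      have := hdeg u
      omega
    have : ((A ∩ G.neighborFinset u).card : ℚ) + ((G.neighborFinset u ∩ N).card : ℚ) + 1
        ≤ (Δ:ℚ) := by exact_mod_cast hcard
    linarith
  -- Assemble
  set S : ℚ := ∑ u ∈ N, ((G.neighborFinset u ∩ N).card : ℚ) with hS
  have hNcard : (N.card : ℚ) ≤ (Δ:ℚ) := by
    have : G.degree v ≤ Δ := hdeg v
    rw [← SimpleGraph.card_neighborFinset_eq_degree] at this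
    exact_mod_cast this
  have hTbound : (∑ u ∈ N, ((A ∩ G.neighborFinset u).card : ℚ))
      ≤ (Δ:ℚ) * ((Δ:ℚ) - 1) - S := by
    have h1 : (∑ u ∈ N, ((A ∩ G.neighborFinset u).card : ℚ))
        ≤ ∑ u ∈ N, ((Δ:ℚ) - 1 - ((G.neighborFinset u ∩ N).card : ℚ)) :=
      Finset.sum_le_sum step3
    have h2 : ∑ u ∈ N, ((Δ:ℚ) - 1 - ((G.neighborFinset u ∩ N).card : ℚ))
        = (N.card : ℚ) * ((Δ:ℚ) - 1) - S := by
      rw [Finset.sum_sub_distrib, Finset.sum_const, hS]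
      push_cast
      ring
    have h3 : (N.card : ℚ) * ((Δ:ℚ) - 1) ≤ (Δ:ℚ) * ((Δ:ℚ) - 1) := by
      apply mul_le_mul_of_nonneg_right hNcard
      have : (1:ℚ) ≤ (Δ:ℚ) := by exact_mod_cast hΔ
      linarith
    linarith
  have hlower : (A.card : ℚ) * ((1 - 3*ε) * Δ)
      ≤ ∑ w ∈ A, ((N ∩ G.neighborFinset w).card : ℚ) := by
    have := Finset.card_nsmul_le_sum A (fun w => ((N ∩ G.neighborFinset w).card : ℚ))
      ((1 - 3*ε) * Δ) step1
    simpa [nsmul_eq_mul] using this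
  have hsum_eq : (∑ w ∈ A, ((N ∩ G.neighborFinset w).card : ℚ))
      = ∑ u ∈ N, ((A ∩ G.neighborFinset u).card : ℚ) := by
    exact_mod_cast step2
  have hmain : (A.card : ℚ) * ((1 - 3*ε) * Δ) ≤ (Δ:ℚ) * ((Δ:ℚ) - 1) - S := by
    calc (A.card : ℚ) * ((1 - 3*ε) * Δ)
        ≤ ∑ w ∈ A, ((N ∩ G.neighborFinset w).card : ℚ) := hlower
      _ = ∑ u ∈ N, ((A ∩ G.neighborFinset u).card : ℚ) := hsum_eq
      _ ≤ (Δ:ℚ) * ((Δ:ℚ) - 1) - S := hTbound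
  have hspar : 2 * sparsity G Δ v * Δ = (Δ:ℚ) * ((Δ:ℚ) - 1) - S := by
    rw [sparsity, edgesIn, ← hN, ← hS]
    field_simp
  have hfinal : (A.card : ℚ) * (1 - 3*ε) ≤ 2 * sparsity G Δ v := by
    have h := hmain
    rw [← hspar] at h
    have := (mul_le_mul_iff_of_pos_right hΔQ).mp (by linarith [h] :
      (A.card : ℚ) * (1 - 3*ε) * Δ ≤ 2 * sparsity G Δ v * Δ)
    exact this
  rw [le_div_iff₀ hε3]
  exact hfinal
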